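/- Fix θ > 0 and suppose Assumptions 1 and 2 hold (b, σ C¹ with 0 < σ² < C; h C¹ positive; k₊, k₋ C² with 0 < k₊, k₋ < K; H₋(·,θ) strictly decreasing and positive on (−∞,α₋(θ)), negative on (α₋(θ),α₊(θ)) if nonempty, and strictly increasing and positive on (α₊(θ),∞)). Let α < β with α < α₋(θ), set λ = H₋(α,θ), and assume ∂ₓH₋(α,θ) < 0. Suppose w : ℝ → ℝ is twice continuously differentiable on [α,β], satisfies (1/2)σ(x)²w''(x) + (1/2)θ(σ(x)w'(x))² + b(x)w'(x) + h(x) − λ = 0 for all x ∈ [α,β], and satisfies w'(α) = −k₊(α), w''(α) = −k₊'(α) and w'(β) = k₋(β). Then w'(x) ≥ −k₊(x) for all x ∈ [α,β]. -/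

import Mathlib

open Set Filter Topology

/-- the lower gradient bound `w' ≥ −k₊` in the continuation
region, established in the proof of Theorem 4.1(II). -/
theorem lower_gradient_bound
    (θ : ℝ) (hθ : 0 < θ)
    (b σ h kp km : ℝ → ℝ) (C K : ℝ)
    (hb : ContDiff ℝ 1 b) (hσ : ContDiff ℝ 1 σ)
    (hσbd : ∀ x : ℝ, 0 < (σ x) ^ 2 ∧ (σ x) ^ 2 < C)
    (hh : ContDiff ℝ 1 h) (hhpos : ∀ x : ℝ, 0 < h x)
    (hkp : ContDiff ℝ 2 kp) (hkm : ContDiff ℝ 2 km)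
    (hkpbd : ∀ x : ℝ, 0 < kp x ∧ kp x < K)
    (hkmbd : ∀ x : ℝ, 0 < km x ∧ km x < K)
    (Hm : ℝ → ℝ)
    (hHm : ∀ x, Hm x = (1 / 2) * θ * (σ x) ^ 2 * (kp x) ^ 2
      - (1 / 2) * (σ x) ^ 2 * deriv kp x - b x * kp x + h x)
    (αm αp : ℝ) (hαmp : αm ≤ αp)
    (hHm1 : StrictAntiOn Hm (Iio αm)) (hHm1pos : ∀ x < αm, 0 < Hm x)
    (hHm2 : ∀ x ∈ Ioo αm αp, Hm x < 0)
    (hHm3 : StrictMonoOn Hm (Ioi αp)) (hHm3pos : ∀ x, αp < x → 0 < Hm x)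
    (α β lam : ℝ) (hαβ : α < β) (hα : α < αm)
    (hlam : lam = Hm α) (hHm'α : deriv Hm α < 0)
    (w : ℝ → ℝ)
    (hw1 : ∀ x ∈ Icc α β, DifferentiableAt ℝ w x)
    (hw2 : ∀ x ∈ Icc α β, DifferentiableAt ℝ (deriv w) x)
    (hw2c : ContinuousOn (deriv (deriv w)) (Icc α β))
    (hODE : ∀ x ∈ Icc α β,
      (1 / 2) * (σ x) ^ 2 * deriv (deriv w) x
        + (1 / 2) * θ * (σ x * deriv w x) ^ 2
        + b x * deriv w x + h x - lam = 0)
    (hw'α : deriv w α = -kp α)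
    (hw''α : deriv (deriv w) α = -deriv kp α)
    (hw'β : deriv w β = km β) :
    ∀ x ∈ Icc α β, -kp x ≤ deriv w x := by
  -- basic differentiability facts
  have hkpd : Differentiable ℝ kp := hkp.differentiable (by norm_num)
  have hdkp : ContDiff ℝ 1 (deriv kp) := by
    have h2 : ContDiff ℝ (1+1 : ℕ) kp := by exact_mod_cast hkp
    exact (contDiff_succ_iff_deriv.mp (by exact_mod_cast h2)).2.2
  have hdkpd : Differentiable ℝ (deriv kp) := hdkp.differentiable one_ne_zero
  have hσd : Differentiable ℝ σ := hσ.differentiable one_ne_zero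
  have hbd : Differentiable ℝ b := hb.differentiable one_ne_zero
  have hhd : Differentiable ℝ h := hh.differentiable one_ne_zero
  have hσ2 : ∀ x : ℝ, σ x ^ 2 ≠ 0 := fun x => ne_of_gt (hσbd x).1
  set F : ℝ → ℝ := fun x => deriv w x + kp x with hFdef
  set G : ℝ → ℝ := fun x => deriv (deriv w) x + deriv kp x with hGdef
  have hFderiv : ∀ x ∈ Icc α β, HasDerivAt F (G x) x := fun x hx =>
    ((hw2 x hx).hasDerivAt).add (hkpd x).hasDerivAt
  have hFcont : ContinuousOn F (Icc α β) := fun x hx =>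
    ((hw2 x hx).continuousAt.add (hkpd x).continuousAt).continuousWithinAt
  have hFα : F α = 0 := by simp [hFdef, hw'α]
  have hGα : G α = 0 := by simp [hGdef, hw''α]
  have hFβ : 0 < F β := by
    simp only [hFdef, hw'β]
    exact add_pos (hkmbd β).1 (hkpbd β).1
  have hkey : ∀ x ∈ Icc α β, σ x ^ 2 * G x
      = 2*(lam - Hm x) - F x * (2 * b x + θ * σ x ^ 2 * (deriv w x - kp x)) := by
    intro x hx
    have h1 := hODE x hx
    simp only [hFdef, hGdef]
    rw [hHm x]
    linear_combination (2:ℝ) * h1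
  have hlampos : 0 < lam := hlam ▸ hHm1pos α hα
  have hHmeq : Hm = fun x => (1 / 2) * θ * (σ x) ^ 2 * (kp x) ^ 2
      - (1 / 2) * (σ x) ^ 2 * deriv kp x - b x * kp x + h x := funext hHm
  have hHmdiff : Differentiable ℝ Hm := by
    rw [hHmeq]
    apply Differentiable.add
    apply Differentiable.sub
    apply Differentiable.sub
    · exact (((differentiable_const _).mul (hσd.pow 2)).mul (hkpd.pow 2))
    · exact ((differentiable_const _).mul (hσd.pow 2)).mul hdkpd
    · exact hbd.mul hkpd
    · exact hhd
  have hHmcont : Continuous Hm := hHmdiff.continuous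
  -- Hm < lam on (α, αp]
  have hHmlt : ∀ x, α < x → x ≤ αp → Hm x < lam := by
    intro x hx1 hx2
    rcases lt_trichotomy x αm with hc | hc | hc
    · exact hlam ▸ hHm1 hα hc hx1
    · subst hc
      set t := (α + x) / 2 with ht
      have ht1 : α < t := by simp [ht]; linarith
      have ht2 : t < x := by simp [ht]; linarith
      have hHt : Hm t < lam := hlam ▸ hHm1 hα ht2 ht1
      have hle : Hm x ≤ Hm t := by
        have hne : (𝓝[Ioo t x] x).NeBot := right_nhdsWithin_Ioo_neBot ht2
        refine le_of_tendsto (hHmcont.continuousAt.continuousWithinAt (s := Ioo t x)) ?_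
        filter_upwards [self_mem_nhdsWithin] with s hs
        exact (hHm1 ht2 hs.2 hs.1).le
      linarith
    · have hmp : αm < αp := lt_of_lt_of_le hc hx2
      rcases lt_or_eq_of_le hx2 with hx3 | hx3
      · exact lt_trans (hHm2 x ⟨hc, hx3⟩) hlampos
      · subst hx3
        have hle : Hm x ≤ 0 := by
          have hne : (𝓝[Ioo αm x] x).NeBot := right_nhdsWithin_Ioo_neBot hmp
          refine le_of_tendsto (hHmcont.continuousAt.continuousWithinAt (s := Ioo αm x)) ?_
          filter_upwards [self_mem_nhdsWithin] with s hs
          exact (hHm2 s hs).le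
        linarith
  -- main argument
  intro x0 hx0
  by_contra hcon
  push_neg at hcon
  have hFy : F x0 < 0 := by simp only [hFdef]; linarith
  set y := x0 with hydef
  have hyα : α < y := by
    rcases lt_or_eq_of_le hx0.1 with h | h
    · exact h
    · exfalso; rw [← h] at hFy; linarith [hFα]
  have hyβ : y < β := by
    rcases lt_or_eq_of_le hx0.2 with h | h
    · exact h
    · exfalso; rw [h] at hFy; linarith
  -- last zero of F before y
  set S : Set ℝ := {x | x ∈ Icc α y ∧ F x = 0} with hSdef
  have hSclosed : IsClosed S := by
    have : S = Icc α y ∩ F ⁻¹' {0} := by ext t; simp [hSdef]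
    rw [this]
    exact (hFcont.mono (Icc_subset_Icc le_rfl hx0.2)).preimage_isClosed_of_isClosed
      isClosed_Icc isClosed_singleton
  have hScpt : IsCompact S := isCompact_Icc.of_isClosed_subset hSclosed (fun t ht => ht.1)
  have hSne : S.Nonempty := ⟨α, ⟨le_rfl, hyα.le⟩, hFα⟩
  set u := sSup S with hudef
  have hu : u ∈ S := hScpt.sSup_mem hSne
  have huy : u < y := lt_of_le_of_ne hu.1.2 (fun e => hFy.ne (e ▸ hu.2))
  have huIcc : u ∈ Icc α β := ⟨hu.1.1, le_trans hu.1.2 hx0.2⟩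
  have hbddS : BddAbove S := hScpt.bddAbove
  have hneg : ∀ t ∈ Ioc u y, F t < 0 := by
    intro t ht
    rcases lt_trichotomy (F t) 0 with hc | hc | hc
    · exact hc
    · exact absurd (le_csSup hbddS ⟨⟨le_trans hu.1.1 ht.1.le, ht.2⟩, hc⟩) (not_le.2 ht.1)
    · exfalso
      have hty : t < y := lt_of_le_of_ne ht.2 (fun e => by rw [e] at hc; linarith)
      obtain ⟨z, hz, hz0⟩ := intermediate_value_Icc' hty.le
        (hFcont.mono (Icc_subset_Icc (le_trans hu.1.1 ht.1.le) hx0.2))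
        (show (0:ℝ) ∈ Icc (F y) (F t) from ⟨hFy.le, hc.le⟩)
      have hzu : z ≤ u := le_csSup hbddS ⟨⟨le_trans hu.1.1 (le_trans ht.1.le hz.1), hz.2⟩, hz0⟩
      have := ht.1
      have := hz.1
      linarith
  have hGu : G u ≤ 0 := by
    have hd : HasDerivWithinAt F (G u) (Ioo u y) u := (hFderiv u huIcc).hasDerivWithinAt
    have hslope := hasDerivWithinAt_iff_tendsto_slope.mp hd
    rw [Set.diff_singleton_eq_self (by simp)] at hslope
    have hne : (𝓝[Ioo u y] u).NeBot := left_nhdsWithin_Ioo_neBot huy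
    refine le_of_tendsto hslope ?_
    filter_upwards [self_mem_nhdsWithin] with t ht
    rw [slope_def_field, hu.2, sub_zero]
    exact div_nonpos_iff.mpr (Or.inr ⟨(hneg t ⟨ht.1, ht.2.le⟩).le, by linarith [ht.1]⟩)
  have hHmu : lam ≤ Hm u := by
    have hk := hkey u huIcc
    rw [hu.2, zero_mul, sub_zero] at hk
    nlinarith [mul_nonpos_of_nonneg_of_nonpos (hσbd u).1.le hGu]
  rcases eq_or_lt_of_le hu.1.1 with hcase | hcase
  · -- u = α : second-order argument near α
    rw [← hcase] at hneg
    set E : ℝ → ℝ := fun x => 2 * b x + θ * σ x ^ 2 * (deriv w x - kp x) with hEdef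
    have hαIcc : α ∈ Icc α β := ⟨le_rfl, hαβ.le⟩
    have hEda : DifferentiableAt ℝ E α := by
      apply DifferentiableAt.add
      · exact (hbd α).const_mul 2
      · exact (((hσd α).pow 2).const_mul θ).mul ((hw2 α hαIcc).sub (hkpd α))
    have hHmda : HasDerivAt Hm (deriv Hm α) α := (hHmdiff α).hasDerivAt
    have hFda : HasDerivAt F 0 α := hGα ▸ hFderiv α hαIcc
    set N : ℝ → ℝ := fun x => 2 * (lam - Hm x) - F x * E x with hNdef
    have hNda : HasDerivAt N (-(2 * deriv Hm α)) α := by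
      have h1 : HasDerivAt (fun x => 2 * (lam - Hm x)) (2 * (0 - deriv Hm α)) α :=
        ((hasDerivAt_const α lam).sub hHmda).const_mul 2
      have h2 : HasDerivAt (fun x => F x * E x) (0 * E α + F α * deriv E α) α :=
        hFda.mul hEda.hasDerivAt
      have h3 := h1.sub h2
      convert h3 using 1
      any_goals rfl
      rw [hFα]; ring
    have hNα : N α = 0 := by
      simp only [hNdef]
      rw [hFα, hlam]; ring
    have hinvda : DifferentiableAt ℝ (fun x => (σ x ^ 2)⁻¹) α := ((hσd α).pow 2).inv (hσ2 α)
    set Q : ℝ → ℝ := fun x => N x * (σ x ^ 2)⁻¹ with hQdef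
    set D : ℝ := -(2 * deriv Hm α) * (σ α ^ 2)⁻¹ with hDdef
    have hQda : HasDerivAt Q D α := by
      have h4 := hNda.mul hinvda.hasDerivAt
      convert h4 using 1
      any_goals rfl
      rw [hNα]; ring
    have hDpos : 0 < D := mul_pos (by linarith) (inv_pos.2 (hσbd α).1)
    have hGQ : ∀ t ∈ Icc α β, G t = Q t := by
      intro t ht
      have hk := hkey t ht
      simp only [hQdef, hNdef, hEdef]
      rw [← div_eq_mul_inv, eq_div_iff (hσ2 t)]
      linear_combination hk
    have hGwithin : HasDerivWithinAt G D (Icc α β) α :=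
      (hQda.hasDerivWithinAt).congr hGQ (hGQ α hαIcc)
    have hslope2 : Tendsto (slope G α) (𝓝[Icc α β \ {α}] α) (𝓝 D) :=
      hasDerivWithinAt_iff_tendsto_slope.mp hGwithin
    have hev : ∀ᶠ t in 𝓝[Ioc α β] α, 0 < slope G α t :=
      (hslope2.eventually_const_lt hDpos).filter_mono
        (nhdsWithin_mono α (show Ioc α β ⊆ Icc α β \ {α} from
          fun t ht => ⟨⟨ht.1.le, ht.2⟩, by simp [ht.1.ne']⟩))
    have hev2 : ∀ᶠ t in 𝓝[Ioc α β] α, 0 < G t := by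
      filter_upwards [hev, self_mem_nhdsWithin] with t h1 h2
      rw [slope_def_field, hGα, sub_zero] at h1
      have h4 : 0 < t - α := by linarith [h2.1]
      have h5 := mul_pos h1 h4
      rwa [div_mul_cancel₀ _ (ne_of_gt h4)] at h5
    obtain ⟨V, hVopen, hVα, hVsub⟩ := mem_nhdsWithin.mp hev2
    obtain ⟨ε, hε, hball⟩ := Metric.isOpen_iff.mp hVopen α hVα
    set c := min (α + ε/2) y with hcdef
    have hc1 : α < c := lt_min (by linarith) hyα
    have hc2 : c ≤ y := min_le_right _ _
    have hcβ : c ≤ β := le_trans hc2 hx0.2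
    have hGpos : ∀ t ∈ Ioc α c, 0 < G t := by
      intro t ht
      apply hVsub
      refine ⟨hball ?_, ht.1, le_trans ht.2 hcβ⟩
      rw [Metric.mem_ball, Real.dist_eq, abs_of_pos (by linarith [ht.1])]
      have h6 : t ≤ α + ε/2 := le_trans ht.2 (min_le_left _ _)
      linarith
    have hmono : StrictMonoOn F (Icc α c) := by
      apply strictMonoOn_of_deriv_pos (convex_Icc α c) (hFcont.mono (Icc_subset_Icc le_rfl hcβ))
      intro t ht
      rw [interior_Icc] at ht
      rw [(hFderiv t ⟨ht.1.le, le_trans ht.2.le hcβ⟩).deriv]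
      exact hGpos t ⟨ht.1, ht.2.le⟩
    have h7 := hmono ⟨le_rfl, hc1.le⟩ ⟨hc1.le, le_rfl⟩ hc1
    rw [hFα] at h7
    linarith [hneg c ⟨hc1, hc2⟩]
  · -- α < u
    rcases le_or_gt u αp with h1 | h1
    · linarith [hHmlt u hcase h1]
    · -- αp < u : first zero after y
      set T : Set ℝ := {x | x ∈ Icc y β ∧ F x = 0} with hTdef
      have hTclosed : IsClosed T := by
        have hTeq : T = Icc y β ∩ F ⁻¹' {0} := by ext t; simp [hTdef]
        rw [hTeq]
        exact (hFcont.mono (Icc_subset_Icc hx0.1 le_rfl)).preimage_isClosed_of_isClosed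
          isClosed_Icc isClosed_singleton
      have hTcpt : IsCompact T := isCompact_Icc.of_isClosed_subset hTclosed (fun t ht => ht.1)
      have hTne : T.Nonempty := by
        obtain ⟨z, hz, hz0⟩ := intermediate_value_Icc hyβ.le
          (hFcont.mono (Icc_subset_Icc hx0.1 le_rfl))
          (show (0:ℝ) ∈ Icc (F y) (F β) from ⟨hFy.le, hFβ.le⟩)
        exact ⟨z, hz, hz0⟩
      set z := sInf T with hzdef
      have hz : z ∈ T := hTcpt.sInf_mem hTne
      have hyz : y < z := lt_of_le_of_ne hz.1.1 (fun e => hFy.ne (by rw [e]; exact hz.2))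
      have hzIcc : z ∈ Icc α β := ⟨le_trans hx0.1 hz.1.1, hz.1.2⟩
      have hbddT : BddBelow T := hTcpt.bddBelow
      have hneg2 : ∀ t ∈ Ico y z, F t < 0 := by
        intro t ht
        rcases lt_trichotomy (F t) 0 with hc | hc | hc
        · exact hc
        · exact absurd (csInf_le hbddT ⟨⟨ht.1, le_trans ht.2.le hz.1.2⟩, hc⟩) (not_le.2 ht.2)
        · exfalso
          have hyt : y < t := lt_of_le_of_ne ht.1 (fun e => by rw [← e] at hc; linarith)
          obtain ⟨s, hs, hs0⟩ := intermediate_value_Icc hyt.le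
            (hFcont.mono (Icc_subset_Icc hx0.1 (le_trans ht.2.le hz.1.2)))
            (show (0:ℝ) ∈ Icc (F y) (F t) from ⟨hFy.le, hc.le⟩)
          have hzs : z ≤ s := csInf_le hbddT ⟨⟨hs.1, le_trans hs.2 (le_trans ht.2.le hz.1.2)⟩, hs0⟩
          have := hs.2
          have := ht.2
          linarith
      have hGz : 0 ≤ G z := by
        have hd : HasDerivWithinAt F (G z) (Ioo y z) z := (hFderiv z hzIcc).hasDerivWithinAt
        have hslope := hasDerivWithinAt_iff_tendsto_slope.mp hd
        rw [Set.diff_singleton_eq_self (by simp)] at hslope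
        have hne : (𝓝[Ioo y z] z).NeBot := right_nhdsWithin_Ioo_neBot hyz
        refine ge_of_tendsto hslope ?_
        filter_upwards [self_mem_nhdsWithin] with t ht
        rw [slope_def_field, hz.2, sub_zero]
        exact div_nonneg_iff.mpr (Or.inr ⟨(hneg2 t ⟨ht.1.le, ht.2⟩).le, by linarith [ht.2]⟩)
      have hHmz : Hm z ≤ lam := by
        have hk := hkey z hzIcc
        rw [hz.2, zero_mul, sub_zero] at hk
        nlinarith [mul_nonneg (hσbd z).1.le hGz]
      have huz : u < z := lt_trans huy hyz
      have h8 : Hm u < Hm z := hHm3 h1 (lt_trans h1 huz) huz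
      linarith
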